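/- arXiv:0709.3785 — 4 statements merged into one kernel-verified Lean document; each statement's English description precedes it below -/
import Mathlib

section
/- Let g ∈ ℂ[y_1,…,y_k] be a polynomial with exactly k+1 terms whose Newton polytope is a k-dimensional simplex. Then the hypersurface V(g) has no singular points in the torus (ℂ*)^k; that is, there is no point ξ ∈ (ℂ*)^k with g(ξ) = 0 and ∂g/∂y_i(ξ) = 0 for all i = 1,…,k. -/
open MvPolynomial

/-- a polynomial in k variables with exactly k+1 terms whose Newton
polytope is a k-dimensional simplex (i.e. whose exponent vectors are affinely
independent) has no singular points in the torus (ℂ*)^k. -/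
theorem stmt_1 {k : ℕ} (g : MvPolynomial (Fin k) ℂ)
    (hcard : g.support.card = k + 1)
    (hsimplex : AffineIndependent ℝ
      (fun ω : {x // x ∈ g.support} => (fun i => (ω.1 i : ℝ) : Fin k → ℝ))) :
    ¬ ∃ ξ : Fin k → ℂ, (∀ i, ξ i ≠ 0) ∧ eval ξ g = 0 ∧
        ∀ i, eval ξ (pderiv i g) = 0 := by
  rintro ⟨ξ, hξ, h0, hd⟩
  set t : (Fin k →₀ ℕ) → ℂ := fun d => coeff d g * ∏ j, ξ j ^ d j with ht
  have hA : ∑ d ∈ g.support, t d = 0 := by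
    rw [← h0, eval_eq']
  have hB : ∀ i, ∑ d ∈ g.support, (d i : ℂ) * t d = 0 := by
    intro i
    have key : ξ i * eval ξ (pderiv i g) = ∑ d ∈ g.support, (d i : ℂ) * t d := by
      conv_lhs => rw [g.as_sum]
      rw [map_sum, map_sum, Finset.mul_sum]
      refine Finset.sum_congr rfl fun d hdmem => ?_
      rw [pderiv_monomial, eval_monomial, Finsupp.prod_pow]
      rcases Nat.eq_zero_or_pos (d i) with h | h
      · simp [h, ht]
      · obtain ⟨e, he⟩ : ∃ e, d i = e + 1 := ⟨d i - 1, (Nat.succ_pred_eq_of_pos h).symm⟩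
        have hp : ∀ m : Fin k →₀ ℕ, ∏ j, ξ j ^ m j
            = ξ i ^ m i * ∏ j ∈ Finset.univ.erase i, ξ j ^ m j :=
          fun m => (Finset.mul_prod_erase _ _ (Finset.mem_univ i)).symm
        have h1 : ((d - Finsupp.single i 1 : Fin k →₀ ℕ) i) = e := by
          simp [Finsupp.tsub_apply, he]
        have h2 : ∀ j ∈ Finset.univ.erase i,
            ξ j ^ ((d - Finsupp.single i 1 : Fin k →₀ ℕ) j) = ξ j ^ d j := by
          intro j hj
          have : j ≠ i := (Finset.mem_erase.mp hj).1
          simp [Finsupp.tsub_apply, Finsupp.single_apply, this.symm]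
        simp only [ht]
        rw [hp, hp d, h1, Finset.prod_congr rfl h2, he]
        push_cast
        ring
    rw [hd i, mul_zero] at key
    exact key.symm
  -- linear algebra part
  have key : ∀ w : {x // x ∈ g.support} → ℝ,
      (∑ ω, w ω = 0) → (∀ i, ∑ ω, w ω * (ω.1 i : ℝ) = 0) → ∀ ω, w ω = 0 := by
    intro w hw1 hw2 ω
    refine hsimplex Finset.univ w hw1 ?_ ω (Finset.mem_univ ω)
    rw [Finset.weightedVSub_eq_linear_combination _ hw1]
    funext i
    simpa [Finset.sum_apply] using hw2 i
  have hzero : ∀ d ∈ g.support, t d = 0 := by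
    intro d hdmem
    have hre : ((t d).re : ℝ) = 0 := by
      refine key (fun ω => (t ω.1).re) ?_ ?_ ⟨d, hdmem⟩
      · rw [Finset.sum_coe_sort g.support (fun d => (t d).re), ← Complex.re_sum, hA,
          Complex.zero_re]
      · intro i
        have := hB i
        have : (∑ d ∈ g.support, (d i : ℂ) * t d).re = 0 := by rw [this]; rfl
        rw [Complex.re_sum] at this
        rw [Finset.sum_coe_sort g.support (fun d => (t d).re * (d i : ℝ))]
        rw [← this]
        refine Finset.sum_congr rfl fun d _ => ?_
        rw [show ((d i : ℕ) : ℂ) = (((d i : ℕ) : ℝ) : ℂ) by push_cast; ring,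
          Complex.re_ofReal_mul]
        ring
    have him : ((t d).im : ℝ) = 0 := by
      refine key (fun ω => (t ω.1).im) ?_ ?_ ⟨d, hdmem⟩
      · rw [Finset.sum_coe_sort g.support (fun d => (t d).im), ← Complex.im_sum, hA,
          Complex.zero_im]
      · intro i
        have := hB i
        have : (∑ d ∈ g.support, (d i : ℂ) * t d).im = 0 := by rw [this]; rfl
        rw [Complex.im_sum] at this
        rw [Finset.sum_coe_sort g.support (fun d => (t d).im * (d i : ℝ))]
        rw [← this]
        refine Finset.sum_congr rfl fun d _ => ?_
        rw [show ((d i : ℕ) : ℂ) = (((d i : ℕ) : ℝ) : ℂ) by push_cast; ring,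
          Complex.im_ofReal_mul]
        ring
    exact Complex.ext hre him
  have hne : g.support.Nonempty := by
    rw [← Finset.card_pos, hcard]; omega
  obtain ⟨d0, hd0⟩ := hne
  have : t d0 ≠ 0 :=
    mul_ne_zero (mem_support_iff.mp hd0)
      (Finset.prod_ne_zero_iff.mpr fun j _ => pow_ne_zero _ (hξ j))
  exact this (hzero d0 hd0)
end

section
/- In the setting of a cycle determined by an interior lattice point ω̃ with surrounding points ω_0 = ω_k, ω_1, …, ω_k = ω_0 (indices cyclic), set w_i = ω_i − ω̃, D_{i,j} = det(w_i,w_j), u = ψ(ω̃), u_j = ψ(ω_j), and let λ_j be the lattice length of the cycle edge dual to the segment from ω̃ to ω_j. Then λ_j = (u−u_{j−1})/D_{j−1,j} + (u−u_{j+1})/D_{j,j+1} + (u−u_j)·D_{j+1,j−1}/(D_{j−1,j}·D_{j,j+1}), and hence the total cycle length equals Σ_{j=1}^k (u−u_j)·(D_{j−1,j}+D_{j,j+1}+D_{j+1,j−1})/(D_{j−1,j}·D_{j,j+1}). -/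
/-- determinant of the 2×2 matrix with columns `u`, `v` -/
def det2 (u v : ℝ × ℝ) : ℝ := u.1 * v.2 - u.2 * v.1

/-- standard inner product on ℝ² -/
def dot2 (u v : ℝ × ℝ) : ℝ := u.1 * v.1 + u.2 * v.2

/-- rotation by 90 degrees: `w^⊥ = (−w₂, w₁)` -/
def perp2 (w : ℝ × ℝ) : ℝ × ℝ := (-w.2, w.1)

/-- the lattice length `λ_j` of the j-th cycle edge and the total cycle
length in terms of the heights `u, u_j` and the determinants `D_{i,j} = det(w_i,w_j)`,
for a cycle around an interior point with surrounding points `ω_j = ω̃ + w_j`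
(indices cyclic in `ZMod k`).  Here `v j` is the vertex of the tropical curve dual
to the cell `Q_j` (characterized by `w_j · v_j = u − u_j`, `w_{j+1} · v_j = u − u_{j+1}`)
and `λ_j` is defined by `v_j − v_{j−1} = λ_j • w_j^⊥`. -/
theorem stmt_6 {k : ℕ} [NeZero k]
    (w : ZMod k → ℝ × ℝ) (u : ℝ) (uu : ZMod k → ℝ)
    (v : ZMod k → ℝ × ℝ) (lam : ZMod k → ℝ)
    (hD : ∀ j, det2 (w j) (w (j + 1)) ≠ 0)
    (hv : ∀ j, dot2 (w j) (v j) = u - uu j ∧ dot2 (w (j + 1)) (v j) = u - uu (j + 1))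
    (hlam : ∀ j, v j - v (j - 1) = lam j • perp2 (w j)) :
    (∀ j, lam j =
        (u - uu (j - 1)) / det2 (w (j - 1)) (w j)
        + (u - uu (j + 1)) / det2 (w j) (w (j + 1))
        + (u - uu j) * det2 (w (j + 1)) (w (j - 1))
            / (det2 (w (j - 1)) (w j) * det2 (w j) (w (j + 1)))) ∧
    ∑ j : ZMod k, lam j =
      ∑ j : ZMod k, (u - uu j) *
        ((det2 (w (j - 1)) (w j) + det2 (w j) (w (j + 1)) + det2 (w (j + 1)) (w (j - 1)))
          / (det2 (w (j - 1)) (w j) * det2 (w j) (w (j + 1)))) := by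

  have key : ∀ j : ZMod k, lam j =
      (u - uu (j - 1)) / det2 (w (j - 1)) (w j)
      + (u - uu (j + 1)) / det2 (w j) (w (j + 1))
      + (u - uu j) * det2 (w (j + 1)) (w (j - 1))
          / (det2 (w (j - 1)) (w j) * det2 (w j) (w (j + 1))) := by
    intro j
    have h5 : j - 1 + 1 = j := by ring
    obtain ⟨h1, h2⟩ := hv j
    obtain ⟨h3, h4⟩ := hv (j - 1)
    rw [h5] at h4
    have hA := hD (j - 1)
    rw [h5] at hA
    have hB := hD j
    have hl := hlam j
    have hx : (v j).1 - (v (j - 1)).1 = lam j * (-(w j).2) := by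
      have := congrArg Prod.fst hl
      simpa [perp2] using this
    have hy : (v j).2 - (v (j - 1)).2 = lam j * (w j).1 := by
      have := congrArg Prod.snd hl
      simpa [perp2] using this
    simp only [det2, dot2] at *
    field_simp
    linear_combination
      ((w (j - 1)).1 * (w j).2 - (w (j - 1)).2 * (w j).1) * h2
      - ((w (j - 1)).1 * (w j).2 - (w (j - 1)).2 * (w j).1) * (w (j + 1)).1 * hx
      - ((w (j - 1)).1 * (w j).2 - (w (j - 1)).2 * (w j).1) * (w (j + 1)).2 * hy
      + ((w j).1 * (w (j + 1)).2 - (w j).2 * (w (j + 1)).1) * h3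
      + ((w (j + 1)).1 * (w (j - 1)).2 - (w (j + 1)).2 * (w (j - 1)).1) * h4
  refine ⟨key, ?_⟩
  calc ∑ j : ZMod k, lam j
      = ∑ j : ZMod k, ((u - uu (j - 1)) / det2 (w (j - 1)) (w j)
        + (u - uu (j + 1)) / det2 (w j) (w (j + 1))
        + (u - uu j) * det2 (w (j + 1)) (w (j - 1))
            / (det2 (w (j - 1)) (w j) * det2 (w j) (w (j + 1)))) :=
        Finset.sum_congr rfl (fun j _ => key j)
    _ = ∑ j : ZMod k, ((u - uu j) / det2 (w j) (w (j + 1))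
        + (u - uu j) / det2 (w (j - 1)) (w j)
        + (u - uu j) * det2 (w (j + 1)) (w (j - 1))
            / (det2 (w (j - 1)) (w j) * det2 (w j) (w (j + 1)))) := by
        rw [Finset.sum_add_distrib, Finset.sum_add_distrib,
            Finset.sum_add_distrib, Finset.sum_add_distrib]
        congr 2
        · exact Fintype.sum_equiv (Equiv.subRight (1 : ZMod k)) _ _
            (fun j => by simp [Equiv.subRight])
        · exact Fintype.sum_equiv (Equiv.addRight (1 : ZMod k)) _ _
            (fun j => by simp [Equiv.addRight])
    _ = ∑ j : ZMod k, (u - uu j) *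
        ((det2 (w (j - 1)) (w j) + det2 (w j) (w (j + 1)) + det2 (w (j + 1)) (w (j - 1)))
          / (det2 (w (j - 1)) (w j) * det2 (w j) (w (j + 1)))) := by
        refine Finset.sum_congr rfl (fun j _ => ?_)
        have h5 : j - 1 + 1 = j := by ring
        have hA := hD (j - 1); rw [h5] at hA
        have hB := hD j
        field_simp
end

section
/- Consider the circuit relation for three collinear lattice points: suppose w_{i−1}, w_i, w_{i+1} ∈ ℝ^2 satisfy λ·(w_{i−1}−w_i) = w_i − w_{i+1} for some λ ∈ ℝ, and D_{i−1,i}+D_{i,i+1} = D_{i−1,i+1} with D_{i,i+1} = λ·D_{i−1,i}, where D_{a,b} = det(w_a,w_b). Then for any w_{i−2} ∈ ℝ^2 (with all relevant determinants nonzero), (D_{i−2,i−1}+D_{i−1,i}+D_{i,i−2})/(D_{i−2,i−1}·D_{i−1,i}) = (D_{i−2,i−1}+D_{i−1,i+1}+D_{i+1,i−2})/(D_{i−2,i−1}·D_{i−1,i+1}). -/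
/-- invariance of the cycle-length coefficient under a modification
along a circuit of three collinear points. -/
theorem stmt_7 (wim2 wim wi wip : ℝ × ℝ) (lam : ℝ)
    (hcol : lam • (wim - wi) = wi - wip)
    (hsum : det2 wim wi + det2 wi wip = det2 wim wip)
    (hlam : det2 wi wip = lam * det2 wim wi)
    (h1 : det2 wim2 wim ≠ 0) (h2 : det2 wim wi ≠ 0)
    (h3 : det2 wim wip ≠ 0) (h4 : det2 wi wip ≠ 0) :
    (det2 wim2 wim + det2 wim wi + det2 wi wim2) / (det2 wim2 wim * det2 wim wi)
      = (det2 wim2 wim + det2 wim wip + det2 wip wim2) / (det2 wim2 wim * det2 wim wip) := by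
  have hkey : det2 wim wip = (1 + lam) * det2 wim wi := by
    rw [← hsum, hlam]; ring
  have hlne : (1 : ℝ) + lam ≠ 0 := by
    intro h
    apply h3
    rw [hkey, h, zero_mul]
  have hc1 : lam * (wim.1 - wi.1) = wi.1 - wip.1 := by
    have h := congrArg Prod.fst hcol
    simp only [Prod.smul_fst, Prod.fst_sub, smul_eq_mul] at h
    exact h
  have hc2 : lam * (wim.2 - wi.2) = wi.2 - wip.2 := by
    have h := congrArg Prod.snd hcol
    simp only [Prod.smul_snd, Prod.snd_sub, smul_eq_mul] at h
    exact h
  have hwip1 : wip.1 = (1 + lam) * wi.1 - lam * wim.1 := by linarith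
  have hwip2 : wip.2 = (1 + lam) * wi.2 - lam * wim.2 := by linarith
  rw [hkey]
  unfold det2 at h1 h2 ⊢
  rw [hwip1, hwip2]
  rw [div_eq_div_iff (mul_ne_zero h1 h2) (mul_ne_zero h1 (mul_ne_zero hlne h2))]
  ring
end

section
/- Let K be a valued field and h = Σ_{ω∈A} h_ω x^ω ∈ K[x_1,…,x_k]. If ξ ∈ (K*)^k is a singular point of V(h) (i.e. h(ξ) = 0 and all ∂h/∂x_i(ξ) = 0), and ω = (val(ξ_1),…,val(ξ_k)), ξ_0 = (lc(ξ_1),…,lc(ξ_k)) ∈ (ℂ*)^k, then ξ_0 is a singular point of the t-initial form tini_ω(h): tini_ω(h)(ξ_0) = 0 and ∂tini_ω(h)/∂x_i(ξ_0) = 0 for all i. -/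
open MvPolynomial
open scoped Classical

/-- The field of (generalized) Puiseux series over ℂ: Hahn series with rational
exponents; the valuation is `HahnSeries.order` and the leading coefficient is
`HahnSeries.leadingCoeff`. -/
abbrev K := HahnSeries ℚ ℂ

/-- The t-initial form of `h ∈ K[x_1,…,x_k]` with respect to `v ∈ ℚ^k`: the complex
polynomial whose terms are the leading coefficients of those terms of `h` whose
weight `val(h_ω) + v·ω` is minimal. -/
noncomputable def tini {k : ℕ} (h : MvPolynomial (Fin k) K) (v : Fin k → ℚ) :
    MvPolynomial (Fin k) ℂ :=
  ∑ ω ∈ h.support.filter (fun ω => ∀ ω' ∈ h.support,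
      (h.coeff ω).order + ∑ i, v i * (ω i : ℚ)
        ≤ (h.coeff ω').order + ∑ i, v i * (ω' i : ℚ)),
    MvPolynomial.monomial ω ((h.coeff ω).leadingCoeff)

open HahnSeries in
lemma K_lc_mul {x y : K} (hx : x ≠ 0) (hy : y ≠ 0) :
    (x * y).leadingCoeff = x.leadingCoeff * y.leadingCoeff := by
  rw [leadingCoeff_eq, order_mul hx hy, coeff_mul_order_add_order]

open HahnSeries in
lemma K_order_pow (x : K) (hx : x ≠ 0) (n : ℕ) : (x ^ n).order = n * x.order := by
  induction n with
  | zero => simp [order_one]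
  | succ n ih =>
      rw [pow_succ, order_mul (pow_ne_zero _ hx) hx, ih]
      push_cast; ring

open HahnSeries in
lemma K_lc_pow (x : K) (hx : x ≠ 0) (n : ℕ) :
    (x ^ n).leadingCoeff = x.leadingCoeff ^ n := by
  induction n with
  | zero => simp [leadingCoeff_one]
  | succ n ih => rw [pow_succ, K_lc_mul (pow_ne_zero _ hx) hx, ih, pow_succ]

open HahnSeries in
lemma K_order_prodPow {k : ℕ} (ξ : Fin k → K) (hξ : ∀ i, ξ i ≠ 0) (ω : Fin k →₀ ℕ) :
    (∏ i, ξ i ^ ω i).order = ∑ i, (ξ i).order * (ω i : ℚ) := by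
  classical
  induction (Finset.univ : Finset (Fin k)) using Finset.induction with
  | empty => simp [order_one]
  | insert _ _ hnotmem =>
      rename_i a s ih
      rw [Finset.prod_insert hnotmem, Finset.sum_insert hnotmem,
        order_mul (pow_ne_zero _ (hξ a))
          (Finset.prod_ne_zero_iff.2 fun i _ => pow_ne_zero _ (hξ i)),
        K_order_pow _ (hξ a), ih, mul_comm]

open HahnSeries in
lemma K_lc_prodPow {k : ℕ} (ξ : Fin k → K) (hξ : ∀ i, ξ i ≠ 0) (ω : Fin k →₀ ℕ) :
    (∏ i, ξ i ^ ω i).leadingCoeff = ∏ i, (ξ i).leadingCoeff ^ ω i := by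
  classical
  induction (Finset.univ : Finset (Fin k)) using Finset.induction with
  | empty => simp [leadingCoeff_one]
  | insert _ _ hnotmem =>
      rename_i a s ih
      rw [Finset.prod_insert hnotmem, Finset.prod_insert hnotmem,
        K_lc_mul (pow_ne_zero _ (hξ a))
          (Finset.prod_ne_zero_iff.2 fun i _ => pow_ne_zero _ (hξ i)),
        K_lc_pow _ (hξ a), ih]

lemma K_coeff_sum {α : Type*} (s : Finset α) (f : α → K) (m : ℚ) :
    (∑ a ∈ s, f a).coeff m = ∑ a ∈ s, (f a).coeff m := by
  classical
  induction s using Finset.induction with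
  | empty => simp
  | insert _ _ hnotmem =>
      rename_i a s ih
      rw [Finset.sum_insert hnotmem, Finset.sum_insert hnotmem, HahnSeries.coeff_add, ih]

open HahnSeries in
/-- Key lemma: a vanishing finite sum of nonzero Hahn series has vanishing sum of
leading coefficients of its minimal-order terms. -/
lemma K_sum_lc {α : Type*} (s : Finset α) (f : α → K) (hf : ∀ a ∈ s, f a ≠ 0)
    (hsum : ∑ a ∈ s, f a = 0) :
    ∑ a ∈ s.filter (fun a => ∀ b ∈ s, (f a).order ≤ (f b).order),
      (f a).leadingCoeff = 0 := by
  classical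
  rcases s.eq_empty_or_nonempty with rfl | hs
  · simp
  set m : ℚ := (s.image fun a => (f a).order).min' (hs.image _) with hm
  obtain ⟨a₀, ha₀s, ha₀⟩ :=
    Finset.mem_image.1 ((s.image fun a => (f a).order).min'_mem (hs.image _))
  have hle : ∀ a ∈ s, m ≤ (f a).order := fun a ha =>
    Finset.min'_le _ _ (Finset.mem_image_of_mem _ ha)
  have hfilter : s.filter (fun a => ∀ b ∈ s, (f a).order ≤ (f b).order)
      = s.filter (fun a => (f a).order = m) := by
    apply Finset.filter_congr
    intro a ha
    constructor
    · intro hall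
      exact le_antisymm ((hall a₀ ha₀s).trans_eq ha₀) (hle a ha)
    · intro heq b hb
      exact heq ▸ hle b hb
  rw [hfilter]
  have h1 : ∀ a ∈ s.filter (fun a => (f a).order = m),
      (f a).leadingCoeff = (f a).coeff m := by
    intro a ha
    rw [leadingCoeff_eq, (Finset.mem_filter.1 ha).2]
  rw [Finset.sum_congr rfl h1]
  have h2 : ∑ a ∈ s.filter (fun a => (f a).order = m), (f a).coeff m
      = ∑ a ∈ s, (f a).coeff m := by
    apply Finset.sum_subset (Finset.filter_subset _ _)
    intro a ha hna
    have hne : (f a).order ≠ m := by simpa [ha] using hna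
    exact HahnSeries.coeff_eq_zero_of_lt_order (lt_of_le_of_ne (hle a ha) (Ne.symm hne))
  rw [h2, ← K_coeff_sum, hsum, HahnSeries.coeff_zero]

/-- `y i * (∂p/∂x_i)(y) = ∑_ω ω_i p_ω y^ω`. -/
lemma eval_pderiv_mul {R : Type*} [CommRing R] {k : ℕ} (p : MvPolynomial (Fin k) R)
    (y : Fin k → R) (i : Fin k) :
    y i * eval y (pderiv i p)
      = ∑ ω ∈ p.support, (ω i : R) * (p.coeff ω * ∏ j, y j ^ ω j) := by
  classical
  conv_lhs => rw [p.as_sum]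
  rw [map_sum, map_sum, Finset.mul_sum]
  apply Finset.sum_congr rfl
  intro ω _
  rw [pderiv_monomial, eval_monomial]
  rcases Nat.eq_zero_or_pos (ω i) with h0 | hpos
  · simp [h0]
  · set ν : Fin k →₀ ℕ := ω - Finsupp.single i 1 with hν
    have hsub : ∀ j, ν j = if j = i then ω i - 1 else ω j := by
      intro j
      rw [hν, Finsupp.tsub_apply]
      by_cases hj : j = i
      · simp [hj]
      · simp [hj, Finsupp.single_apply, Ne.symm hj]
    have hprod : ν.prod (fun n e => y n ^ e) = ∏ j, y j ^ ν j := by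
      rw [Finsupp.prod_fintype]
      intro j; simp
    rw [hprod]
    have hsplit : ∀ (μ : Fin k →₀ ℕ), ∏ j, y j ^ μ j
        = y i ^ μ i * ∏ j ∈ Finset.univ.erase i, y j ^ μ j := by
      intro μ
      rw [← Finset.mul_prod_erase Finset.univ _ (Finset.mem_univ i)]
    rw [hsplit ν, hsplit ω]
    have herase : ∏ j ∈ Finset.univ.erase i, y j ^ ν j
        = ∏ j ∈ Finset.univ.erase i, y j ^ ω j := by
      apply Finset.prod_congr rfl
      intro j hj
      rw [hsub j, if_neg (Finset.mem_erase.1 hj).1]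
    have hpow : y i * y i ^ ν i = y i ^ ω i := by
      rw [hsub i, if_pos rfl, ← pow_succ', Nat.sub_add_cancel hpos]
    calc y i * (p.coeff ω * (ω i : R) * (y i ^ ν i * ∏ j ∈ Finset.univ.erase i, y j ^ ν j))
        = (ω i : R) * (p.coeff ω *
            ((y i * y i ^ ν i) * ∏ j ∈ Finset.univ.erase i, y j ^ ν j)) := by ring
      _ = (ω i : R) * (p.coeff ω * (y i ^ ω i * ∏ j ∈ Finset.univ.erase i, y j ^ ω j)) := by
          rw [hpow, herase]

open HahnSeries in
/-- if `ξ ∈ (K*)^k` is a singular point of `V(h)`, then the point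
`ξ₀ = (lc ξ_1, …, lc ξ_k) ∈ (ℂ*)^k` is a singular point of the t-initial form
`tini_ω(h)`, where `ω = (val ξ_1, …, val ξ_k)`. -/
theorem stmt_10 {k : ℕ} (h : MvPolynomial (Fin k) K) (ξ : Fin k → K)
    (hξ0 : ∀ i, ξ i ≠ 0)
    (hsing : eval ξ h = 0 ∧ ∀ i, eval ξ (pderiv i h) = 0) :
    (∀ i, (ξ i).leadingCoeff ≠ 0) ∧
    eval (fun i => (ξ i).leadingCoeff) (tini h (fun i => (ξ i).order)) = 0 ∧
    ∀ i, eval (fun i => (ξ i).leadingCoeff)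
        (pderiv i (tini h (fun i => (ξ i).order))) = 0 := by
  classical
  set z : Fin k → ℂ := fun i => (ξ i).leadingCoeff with hz
  have hz0 : ∀ i, z i ≠ 0 := fun i => leadingCoeff_ne_zero.mpr (hξ0 i)
  set w : (Fin k →₀ ℕ) → ℚ :=
    fun ω => (h.coeff ω).order + ∑ i, (ξ i).order * (ω i : ℚ) with hw
  set S : Finset (Fin k →₀ ℕ) :=
    h.support.filter (fun ω => ∀ ω' ∈ h.support, w ω ≤ w ω') with hS
  have htini : tini h (fun i => (ξ i).order)
      = ∑ ω ∈ S, MvPolynomial.monomial ω ((h.coeff ω).leadingCoeff) := rfl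
  set F : (Fin k →₀ ℕ) → K := fun ω => h.coeff ω * ∏ j, ξ j ^ ω j with hF
  have hprodne : ∀ ω : Fin k →₀ ℕ, (∏ j, ξ j ^ ω j) ≠ 0 :=
    fun ω => Finset.prod_ne_zero_iff.2 fun j _ => pow_ne_zero _ (hξ0 j)
  have hFne : ∀ ω ∈ h.support, F ω ≠ 0 := fun ω hωs =>
    mul_ne_zero (MvPolynomial.mem_support_iff.1 hωs) (hprodne ω)
  have hFord : ∀ ω ∈ h.support, (F ω).order = w ω := by
    intro ω hωs
    rw [hF, order_mul (MvPolynomial.mem_support_iff.1 hωs) (hprodne ω),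
      K_order_prodPow ξ hξ0 ω]
  have hFlc : ∀ ω ∈ h.support,
      (F ω).leadingCoeff = (h.coeff ω).leadingCoeff * ∏ j, z j ^ ω j := by
    intro ω hωs
    rw [hF, K_lc_mul (MvPolynomial.mem_support_iff.1 hωs) (hprodne ω),
      K_lc_prodPow ξ hξ0 ω]
  have htini_coeff : ∀ ω, (tini h (fun i => (ξ i).order)).coeff ω
      = if ω ∈ S then (h.coeff ω).leadingCoeff else 0 := by
    intro ω
    rw [htini, MvPolynomial.coeff_sum]
    simp only [MvPolynomial.coeff_monomial]
    rw [Finset.sum_ite_eq' S ω (fun ω' => (h.coeff ω').leadingCoeff)]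
  have htini_supp : (tini h (fun i => (ξ i).order)).support ⊆ S := by
    intro ω hω
    by_contra hns
    exact (MvPolynomial.mem_support_iff.1 hω) (by rw [htini_coeff, if_neg hns])
  have hsumS : ∀ (g : (Fin k →₀ ℕ) → ℂ → ℂ),
      (∀ ω, g ω 0 = 0) →
      ∑ ω ∈ (tini h (fun i => (ξ i).order)).support,
          g ω ((tini h (fun i => (ξ i).order)).coeff ω)
        = ∑ ω ∈ S, g ω ((h.coeff ω).leadingCoeff) := by
    intro g hg0
    rw [Finset.sum_subset htini_supp (fun ω _ hωn => by
      rw [MvPolynomial.notMem_support_iff.1 hωn]; exact hg0 ω)]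
    apply Finset.sum_congr rfl
    intro ω hω
    rw [htini_coeff, if_pos hω]
  refine ⟨hz0, ?_, ?_⟩
  · -- the value of the initial form vanishes
    have hsum : ∑ ω ∈ h.support, F ω = 0 := by rw [← eval_eq']; exact hsing.1
    have key := K_sum_lc h.support F hFne hsum
    have hfc : h.support.filter
        (fun ω => ∀ b ∈ h.support, (F ω).order ≤ (F b).order) = S := by
      apply Finset.filter_congr
      intro ω hω
      constructor
      · intro hall b hb; rw [← hFord ω hω, ← hFord b hb]; exact hall b hb
      · intro hall b hb; rw [hFord ω hω, hFord b hb]; exact hall b hb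
    rw [hfc] at key
    have hev : eval z (tini h (fun i => (ξ i).order))
        = ∑ ω ∈ S, (h.coeff ω).leadingCoeff * ∏ j, z j ^ ω j := by
      rw [eval_eq']
      exact hsumS (fun ω c => c * ∏ j, z j ^ ω j) (fun ω => zero_mul _)
    rw [hev, ← key]
    apply Finset.sum_congr rfl
    intro ω hω
    exact (hFlc ω (Finset.mem_filter.1 hω).1).symm
  · -- the partial derivatives of the initial form vanish
    intro i
    set s : Finset (Fin k →₀ ℕ) := h.support.filter (fun ω => ω i ≠ 0) with hs
    set G : (Fin k →₀ ℕ) → K := fun ω => ((ω i : ℕ) : K) * F ω with hG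
    have hcast : ∀ (n : ℕ), ((n : ℕ) : K) = HahnSeries.C ((n : ℕ) : ℂ) := by
      intro n; rw [map_natCast]
    have hGne : ∀ ω ∈ s, G ω ≠ 0 := by
      intro ω hω
      have hωi : ω i ≠ 0 := (Finset.mem_filter.1 hω).2
      exact mul_ne_zero (by rw [hcast]; exact C_ne_zero (Nat.cast_ne_zero.mpr hωi))
        (hFne ω (Finset.mem_filter.1 hω).1)
    have hGord : ∀ ω ∈ s, (G ω).order = w ω := by
      intro ω hω
      have hωi : ω i ≠ 0 := (Finset.mem_filter.1 hω).2
      rw [hG, order_mul (by rw [hcast]; exact C_ne_zero (Nat.cast_ne_zero.mpr hωi))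
        (hFne ω (Finset.mem_filter.1 hω).1), hcast, order_C, zero_add,
        hFord ω (Finset.mem_filter.1 hω).1]
    have hGlc : ∀ ω ∈ s.filter (fun ω => ∀ b ∈ s, w ω ≤ w b), (G ω).leadingCoeff
        = (ω i : ℂ) * ((h.coeff ω).leadingCoeff * ∏ j, z j ^ ω j) := by
      intro ω hω'
      have hω := (Finset.mem_filter.1 hω').1
      have hωi : ω i ≠ 0 := (Finset.mem_filter.1 hω).2
      rw [hG, K_lc_mul (by rw [hcast]; exact C_ne_zero (Nat.cast_ne_zero.mpr hωi))
        (hFne ω (Finset.mem_filter.1 hω).1), hcast, HahnSeries.C_apply, leadingCoeff_of_single,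
        hFlc ω (Finset.mem_filter.1 hω).1]
    have hGsum : ∑ ω ∈ s, G ω = 0 := by
      have h1 : ∑ ω ∈ s, G ω = ∑ ω ∈ h.support, G ω := by
        apply Finset.sum_filter_of_ne
        intro ω _ hGω h0
        apply hGω
        rw [hG]; simp [h0]
      have h2 : ∑ ω ∈ h.support, G ω = ξ i * eval ξ (pderiv i h) := by
        rw [eval_pderiv_mul h ξ i]
      rw [h1, h2, hsing.2 i, mul_zero]
    have key := K_sum_lc s G hGne hGsum
    have hfc : s.filter (fun ω => ∀ b ∈ s, (G ω).order ≤ (G b).order)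
        = s.filter (fun ω => ∀ b ∈ s, w ω ≤ w b) := by
      apply Finset.filter_congr
      intro ω hω
      constructor
      · intro hall b hb; rw [← hGord ω hω, ← hGord b hb]; exact hall b hb
      · intro hall b hb; rw [hGord ω hω, hGord b hb]; exact hall b hb
    rw [hfc, Finset.sum_congr rfl hGlc] at key
    -- key : ∑ ω ∈ s.filter (min), (ω i) * (lc h_ω * ∏ z^ω) = 0
    have hQ : z i * eval z (pderiv i (tini h (fun i => (ξ i).order)))
        = ∑ ω ∈ S, (ω i : ℂ) * ((h.coeff ω).leadingCoeff * ∏ j, z j ^ ω j) := by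
      rw [eval_pderiv_mul]
      exact hsumS (fun ω c => (ω i : ℂ) * (c * ∏ j, z j ^ ω j)) (fun ω => by simp)
    have hQ2 : ∑ ω ∈ S, (ω i : ℂ) * ((h.coeff ω).leadingCoeff * ∏ j, z j ^ ω j)
        = ∑ ω ∈ S.filter (fun ω => ω i ≠ 0),
            (ω i : ℂ) * ((h.coeff ω).leadingCoeff * ∏ j, z j ^ ω j) := by
      symm
      apply Finset.sum_filter_of_ne
      intro ω _ hne h0
      apply hne
      simp [h0]
    have hzero : z i * eval z (pderiv i (tini h (fun i => (ξ i).order))) = 0 := by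
      rw [hQ, hQ2]
      by_cases hA : ∃ ω₀ ∈ S, ω₀ i ≠ 0
      · have hsets : S.filter (fun ω => ω i ≠ 0)
            = s.filter (fun ω => ∀ b ∈ s, w ω ≤ w b) := by
          ext ω
          constructor
          · intro hω
            obtain ⟨hωS, hωi⟩ := Finset.mem_filter.1 hω
            obtain ⟨hωsupp, hωmin⟩ := Finset.mem_filter.1 hωS
            refine Finset.mem_filter.2 ⟨Finset.mem_filter.2 ⟨hωsupp, hωi⟩, ?_⟩
            intro b hb
            exact hωmin b (Finset.mem_filter.1 hb).1
          · intro hω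
            obtain ⟨hωs, hωmin⟩ := Finset.mem_filter.1 hω
            obtain ⟨hωsupp, hωi⟩ := Finset.mem_filter.1 hωs
            obtain ⟨ω₀, hω₀S, hω₀i⟩ := hA
            obtain ⟨hω₀supp, hω₀min⟩ := Finset.mem_filter.1 hω₀S
            refine Finset.mem_filter.2 ⟨Finset.mem_filter.2 ⟨hωsupp, ?_⟩, hωi⟩
            intro b hb
            exact le_trans
              (hωmin ω₀ (Finset.mem_filter.2 ⟨hω₀supp, hω₀i⟩)) (hω₀min b hb)
        rw [hsets]
        exact key
      · push_neg at hA
        have : S.filter (fun ω => ω i ≠ 0) = ∅ := by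
          apply Finset.filter_eq_empty_iff.2
          intro ω hω
          simpa using hA ω hω
        rw [this, Finset.sum_empty]
    exact (mul_eq_zero.mp hzero).resolve_left (hz0 i)
end
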